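/- Assume μ₁ ≥ μ₂. Then for every (i,k,ℓ) ∈ X̃_diff such that (i+1,k,ℓ) ∈ X̃_diff, one has D(i,k,ℓ) − D(i+1,k,ℓ) ≥ 0; that is, for each fixed pair (k,ℓ) with k + ℓ = C₁ and k ≥ 1, the map i ↦ D(i,k,ℓ) is non-increasing on ℤ≥0. -/

import Mathlib

/-- Overall service rate `d(k,ℓ) = k·μ₁ + min(ℓ,C₂)·μ₂`. -/
noncomputable def dRate (C₂ : ℕ) (μ₁ μ₂ : ℝ) (k ℓ : ℕ) : ℝ :=
  (k : ℝ) * μ₁ + ((min ℓ C₂ : ℕ) : ℝ) * μ₂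

/-- Membership of `(i,k,ℓ)` in the state space `X`. -/
def memX (C₁ : ℕ) (i k ℓ : ℕ) : Prop :=
  (i = 0 ∧ k + ℓ < C₁) ∨ k + ℓ = C₁

/-- `v` satisfies the optimality (Bellman) equations of the clearing system.
Terms whose coefficient `k·μ₁` or `min(ℓ,C₂)·μ₂` vanishes contribute `0`,
matching the convention that such summands are omitted. -/
def IsValue (C₁ C₂ : ℕ) (μ₁ μ₂ h₀ h₁ h₂ : ℝ) (v : ℕ → ℕ → ℕ → ℝ) : Prop :=
  v 0 0 0 = 0 ∧
  (∀ k ℓ : ℕ, k + ℓ ≤ C₁ → ¬(k = 0 ∧ ℓ = 0) →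
    v 0 k ℓ = ((k : ℝ) * h₁ + (ℓ : ℝ) * h₂) / dRate C₂ μ₁ μ₂ k ℓ
      + ((k : ℝ) * μ₁ / dRate C₂ μ₁ μ₂ k ℓ) * v 0 (k - 1) ℓ
      + (((min ℓ C₂ : ℕ) : ℝ) * μ₂ / dRate C₂ μ₁ μ₂ k ℓ) * v 0 k (ℓ - 1)) ∧
  (∀ i k ℓ : ℕ, k + ℓ = C₁ →
    v (i + 1) k ℓ =
      (((i : ℝ) + 1) * h₀ + (k : ℝ) * h₁ + (ℓ : ℝ) * h₂) / dRate C₂ μ₁ μ₂ k ℓ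
      + ((k : ℝ) * μ₁ / dRate C₂ μ₁ μ₂ k ℓ) *
          min (v i k ℓ) (v i (k - 1) (ℓ + 1))
      + (((min ℓ C₂ : ℕ) : ℝ) * μ₂ / dRate C₂ μ₁ μ₂ k ℓ) *
          min (v i (k + 1) (ℓ - 1)) (v i k ℓ))

/-- The difference `D(i,k,ℓ) = v(i,k,ℓ) − v(i,k−1,ℓ+1)`. -/
noncomputable def Dv (v : ℕ → ℕ → ℕ → ℝ) (i k ℓ : ℕ) : ℝ :=
  v i k ℓ - v i (k - 1) (ℓ + 1)

namespace Stmt0Aux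

/-- marginal cost of one more type-2 job: `γ j = j·h₂/(min(j,C₂)·μ₂)`. -/
noncomputable def gam (C₂ : ℕ) (μ₂ h₂ : ℝ) (j : ℕ) : ℝ :=
  (j : ℝ) * h₂ / (((min j C₂ : ℕ) : ℝ) * μ₂)

noncomputable def gsum (C₂ : ℕ) (μ₂ h₂ : ℝ) : ℕ → ℝ
  | 0 => 0
  | (j+1) => gsum C₂ μ₂ h₂ j + gam C₂ μ₂ h₂ (j+1)

lemma gam_nonneg (C₂ : ℕ) {μ₂ h₂ : ℝ} (hμ₂ : 0 < μ₂) (hh₂ : 0 ≤ h₂) (j : ℕ) :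
    0 ≤ gam C₂ μ₂ h₂ j := by
  unfold gam
  positivity

lemma gam_mono (C₂ : ℕ) {μ₂ h₂ : ℝ} (hμ₂ : 0 < μ₂) (hh₂ : 0 ≤ h₂) (hC₂ : 1 ≤ C₂)
    (j : ℕ) : gam C₂ μ₂ h₂ j ≤ gam C₂ μ₂ h₂ (j+1) := by
  unfold gam
  rcases Nat.lt_or_ge j C₂ with h | h
  · -- min j C₂ = j, min (j+1) C₂ = j+1
    rw [min_eq_left (by omega), min_eq_left (by omega)]
    rcases Nat.eq_zero_or_pos j with rfl | hj
    · simp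
      positivity
    · have hj' : (0:ℝ) < j := by exact_mod_cast hj
      push_cast
      rw [div_le_div_iff₀ (by positivity) (by positivity)]
      ring_nf
      nlinarith [sq_nonneg h₂]
  · rw [min_eq_right h, min_eq_right (by omega)]
    have hC₂' : (0:ℝ) < (C₂:ℝ) := by exact_mod_cast hC₂
    apply div_le_div_of_nonneg_right ?_ (by positivity)
    · have : (j:ℝ) ≤ (j:ℝ)+1 := by linarith
      push_cast
      nlinarith

lemma v0_eq {C₁ C₂ : ℕ} {μ₁ μ₂ h₀ h₁ h₂ : ℝ} {v : ℕ → ℕ → ℕ → ℝ}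
    (hv : IsValue C₁ C₂ μ₁ μ₂ h₀ h₁ h₂ v)
    (hμ₁ : 0 < μ₁) (hμ₂ : 0 < μ₂) (hC₂ : 1 ≤ C₂) :
    ∀ n k ℓ : ℕ, k + ℓ = n → n ≤ C₁ →
      v 0 k ℓ = (k : ℝ) * (h₁/μ₁) + gsum C₂ μ₂ h₂ ℓ := by
  intro n
  induction n with
  | zero =>
    intro k ℓ h _
    obtain ⟨rfl, rfl⟩ : k = 0 ∧ ℓ = 0 := by omega
    simpa [gsum] using hv.1
  | succ n IH =>
    intro k ℓ h hle
    have hrec := hv.2.1 k ℓ (by omega) (by omega)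
    rcases Nat.eq_zero_or_pos k with rfl | hk
    · -- k = 0, ℓ = n+1
      obtain ⟨t, rfl⟩ : ∃ t, ℓ = t + 1 := ⟨n, by omega⟩
      have h0 := IH 0 t (by omega) (by omega)
      rw [hrec]
      simp only [Nat.add_sub_cancel] at *
      rw [h0]
      have hm : 1 ≤ min (t+1) C₂ := by omega
      have hm' : (0:ℝ) < ((min (t+1) C₂ : ℕ):ℝ) := by exact_mod_cast hm
      simp only [dRate, gam, gsum, Nat.cast_zero]
      field_simp
      ring
    · rcases Nat.eq_zero_or_pos ℓ with rfl | hl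
      · -- ℓ = 0, k = n+1
        obtain ⟨s, rfl⟩ : ∃ s, k = s + 1 := ⟨n, by omega⟩
        have h0 := IH s 0 (by omega) (by omega)
        rw [hrec]
        simp only [Nat.add_sub_cancel] at *
        rw [h0]
        simp only [dRate, gsum, Nat.min_zero, Nat.zero_min, Nat.cast_zero, zero_mul, add_zero,
          zero_div, zero_mul]
        push_cast
        field_simp
        ring
      · -- k = s+1, ℓ = t+1
        obtain ⟨s, rfl⟩ : ∃ s, k = s + 1 := ⟨k - 1, by omega⟩
        obtain ⟨t, rfl⟩ : ∃ t, ℓ = t + 1 := ⟨ℓ - 1, by omega⟩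
        have h1 := IH s (t+1) (by omega) (by omega)
        have h2 := IH (s+1) t (by omega) (by omega)
        rw [hrec]
        simp only [Nat.add_sub_cancel] at *
        rw [h1, h2]
        have hm : 1 ≤ min (t+1) C₂ := by omega
        have hm' : (0:ℝ) < ((min (t+1) C₂ : ℕ):ℝ) := by exact_mod_cast hm
        have hgs : gsum C₂ μ₂ h₂ (t+1) = gsum C₂ μ₂ h₂ t + gam C₂ μ₂ h₂ (t+1) := rfl
        rw [hgs]
        simp only [dRate, gam]
        push_cast
        field_simp
        ring

lemma minshift (x a b : ℝ) : min (x+a) (x+b) = x + min a b := by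
  rcases le_total a b with h | h
  · rw [min_eq_left (by linarith), min_eq_left h]
  · rw [min_eq_right (by linarith), min_eq_right h]

lemma gam_mul {C₂ : ℕ} {μ₂ h₂ : ℝ} (hμ₂ : 0 < μ₂) (hC₂ : 1 ≤ C₂) (t : ℕ) :
    ((t+1 : ℕ):ℝ)*h₂ = ((min (t+1) C₂ : ℕ):ℝ)*μ₂ * gam C₂ μ₂ h₂ (t+1) := by
  have hm : 1 ≤ min (t+1) C₂ := by omega
  have hm' : (0:ℝ) < ((min (t+1) C₂ : ℕ):ℝ) := by exact_mod_cast hm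
  unfold gam
  field_simp

lemma v1_eq {C₁ C₂ : ℕ} {μ₁ μ₂ h₀ h₁ h₂ : ℝ} {v : ℕ → ℕ → ℕ → ℝ}
    (hv : IsValue C₁ C₂ μ₁ μ₂ h₀ h₁ h₂ v)
    (hμ₁ : 0 < μ₁) (hμ₂ : 0 < μ₂) (hC₂ : 1 ≤ C₂) (hC : C₂ < C₁) :
    ∀ K L : ℕ, K + L = C₁ →
      v 1 K L = v 0 K L +
        (h₀ + (K:ℝ)*μ₁ * min (h₁/μ₁) (gam C₂ μ₂ h₂ (L+1))
            + ((min L C₂ : ℕ):ℝ)*μ₂ * min (h₁/μ₁) (gam C₂ μ₂ h₂ L))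
          / dRate C₂ μ₁ μ₂ K L := by
  intro K L hKL
  have e := hv.2.2 0 K L hKL
  simp only [Nat.cast_zero, zero_add, Nat.zero_add] at e
  rcases Nat.eq_zero_or_pos K with rfl | hK
  · -- K = 0, L = C₁ ≥ 2
    obtain ⟨t, rfl⟩ : ∃ t, L = t + 1 := ⟨L - 1, by omega⟩
    have va := v0_eq hv hμ₁ hμ₂ hC₂ (t+1) 0 (t+1) (by omega) (by omega)
    have vb := v0_eq hv hμ₁ hμ₂ hC₂ (t+1) 1 t (by omega) (by omega)
    push_cast at va vb
    simp only [Nat.add_sub_cancel, Nat.zero_sub, Nat.cast_zero, zero_mul, zero_div,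
      zero_add] at e ⊢
    have hmin : min (v 0 (0+1) t) (v 0 0 (t+1)) =
        gsum C₂ μ₂ h₂ t + min (h₁/μ₁) (gam C₂ μ₂ h₂ (t+1)) := by
      rw [show (0+1 : ℕ) = 1 from rfl, vb, va]
      rw [show (1:ℝ)*(h₁/μ₁) + gsum C₂ μ₂ h₂ t
            = gsum C₂ μ₂ h₂ t + (h₁/μ₁) by ring,
          show (0:ℝ)*(h₁/μ₁) + gsum C₂ μ₂ h₂ (t+1)
            = gsum C₂ μ₂ h₂ t + gam C₂ μ₂ h₂ (t+1) by simp [gsum],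
          minshift]
    rw [e, hmin, va, gam_mul hμ₂ hC₂ t,
       show gsum C₂ μ₂ h₂ (t+1) = gsum C₂ μ₂ h₂ t + gam C₂ μ₂ h₂ (t+1) from rfl]
    have hm : 1 ≤ min (t+1) C₂ := by omega
    have hm' : (0:ℝ) < ((min (t+1) C₂ : ℕ):ℝ) := by exact_mod_cast hm
    simp only [dRate, Nat.cast_zero, zero_mul, zero_add]
    field_simp
    ring
  · obtain ⟨s, rfl⟩ : ∃ s, K = s + 1 := ⟨K - 1, by omega⟩
    rcases Nat.eq_zero_or_pos L with rfl | hL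
    · -- L = 0
      have va := v0_eq hv hμ₁ hμ₂ hC₂ (s+1) (s+1) 0 (by omega) (by omega)
      have vb := v0_eq hv hμ₁ hμ₂ hC₂ (s+1) s 1 (by omega) (by omega)
      push_cast at va vb
      simp only [Nat.add_sub_cancel, Nat.min_zero, Nat.zero_min, Nat.cast_zero,
        zero_mul, zero_div, add_zero, zero_add] at e ⊢
      have hmin : min (v 0 (s+1) 0) (v 0 s (0+1)) =
          (s:ℝ)*(h₁/μ₁) + min (h₁/μ₁) (gam C₂ μ₂ h₂ 1) := by
        rw [show (0+1 : ℕ) = 1 from rfl, va, vb]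
        rw [show ((s:ℝ)+1)*(h₁/μ₁) + gsum C₂ μ₂ h₂ 0
              = (s:ℝ)*(h₁/μ₁) + (h₁/μ₁) by simp [gsum]; ring,
            show (s:ℝ)*(h₁/μ₁) + gsum C₂ μ₂ h₂ 1
              = (s:ℝ)*(h₁/μ₁) + gam C₂ μ₂ h₂ 1 by simp [gsum],
            minshift]
    
      rw [show gsum C₂ μ₂ h₂ 0 = 0 from rfl] at va
      rw [e, hmin, va]
      have hμ₁' : μ₁ ≠ 0 := ne_of_gt hμ₁
      have hd : (0:ℝ) < ((s+1:ℕ):ℝ)*μ₁ := by positivity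
      simp only [dRate, Nat.min_zero, Nat.zero_min, Nat.cast_zero, zero_mul, add_zero]
      push_cast
      field_simp
      ring
    · -- K = s+1, L = t+1
      obtain ⟨t, rfl⟩ : ∃ t, L = t + 1 := ⟨L - 1, by omega⟩
      have va := v0_eq hv hμ₁ hμ₂ hC₂ C₁ (s+1) (t+1) (by omega) (by omega)
      have vb := v0_eq hv hμ₁ hμ₂ hC₂ C₁ s (t+2) (by omega) (by omega)
      have vc := v0_eq hv hμ₁ hμ₂ hC₂ C₁ (s+2) t (by omega) (by omega)
      push_cast at va vb vc
      simp only [Nat.add_sub_cancel] at e ⊢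
      have hg2 : gsum C₂ μ₂ h₂ (t+2) = gsum C₂ μ₂ h₂ (t+1) + gam C₂ μ₂ h₂ (t+2) := rfl
      have hg1 : gsum C₂ μ₂ h₂ (t+1) = gsum C₂ μ₂ h₂ t + gam C₂ μ₂ h₂ (t+1) := rfl
      have hmin1 : min (v 0 (s+1) (t+1)) (v 0 s (t+1+1)) =
          (s:ℝ)*(h₁/μ₁) + gsum C₂ μ₂ h₂ (t+1) + min (h₁/μ₁) (gam C₂ μ₂ h₂ (t+2)) := by
        rw [show (t+1+1:ℕ) = t+2 from rfl, va, vb]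
        rw [show ((s:ℝ)+1)*(h₁/μ₁) + gsum C₂ μ₂ h₂ (t+1)
              = ((s:ℝ)*(h₁/μ₁) + gsum C₂ μ₂ h₂ (t+1)) + (h₁/μ₁) by ring,
            show (s:ℝ)*(h₁/μ₁) + gsum C₂ μ₂ h₂ (t+2)
              = ((s:ℝ)*(h₁/μ₁) + gsum C₂ μ₂ h₂ (t+1)) + gam C₂ μ₂ h₂ (t+2) by
                rw [hg2]; ring,
            minshift]
      have hmin2 : min (v 0 (s+1+1) t) (v 0 (s+1) (t+1)) =
          ((s:ℝ)+1)*(h₁/μ₁) + gsum C₂ μ₂ h₂ t + min (h₁/μ₁) (gam C₂ μ₂ h₂ (t+1)) := by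
        rw [show (s+1+1:ℕ) = s+2 from rfl, vc, va]
        rw [show ((s:ℝ)+2)*(h₁/μ₁) + gsum C₂ μ₂ h₂ t
              = (((s:ℝ)+1)*(h₁/μ₁) + gsum C₂ μ₂ h₂ t) + (h₁/μ₁) by ring,
            show ((s:ℝ)+1)*(h₁/μ₁) + gsum C₂ μ₂ h₂ (t+1)
              = (((s:ℝ)+1)*(h₁/μ₁) + gsum C₂ μ₂ h₂ t) + gam C₂ μ₂ h₂ (t+1) by
                rw [hg1]; ring,
            minshift]
      simp only [show (t+1+1:ℕ) = t+2 from rfl] at e ⊢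
      rw [e, hmin1, hmin2, va, gam_mul hμ₂ hC₂ t, hg1]
      have hm : 1 ≤ min (t+1) C₂ := by omega
      have hm' : (0:ℝ) < ((min (t+1) C₂ : ℕ):ℝ) := by exact_mod_cast hm
      have hd : (0:ℝ) < dRate C₂ μ₁ μ₂ (s+1) (t+1) := by
        simp only [dRate]; positivity
      simp only [dRate] at hd ⊢
      push_cast at hd ⊢
      field_simp
      ring

lemma min_fst (a b : ℝ) : min a b = a - max (a-b) 0 := by
  rcases le_total a b with h | h
  · rw [min_eq_left h, max_eq_right (by linarith)]; ring
  · rw [min_eq_right h, max_eq_left (by linarith)]; ring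

lemma min_snd (a b : ℝ) : min a b = b + min (a-b) 0 := by
  rcases le_total a b with h | h
  · rw [min_eq_left h, min_eq_left (by linarith)]; ring
  · rw [min_eq_right h, min_eq_right (by linarith)]; ring

lemma frac_mono {h₀ c1 c2 c1' c2' M1 M2 M3 : ℝ}
    (hc1 : 0 ≤ c1) (hc2 : 0 ≤ c2) (hc1' : 0 ≤ c1') (hc2' : 0 ≤ c2')
    (hd : 0 < c1 + c2) (hd' : 0 < c1' + c2') (hdd : c1' + c2' ≤ c1 + c2)
    (h0 : 0 ≤ h₀) (h12 : M1 ≤ M2) (h23 : M2 ≤ M3) :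
    (h₀ + c1*M2 + c2*M1)/(c1+c2) ≤ (h₀ + c1'*M3 + c2'*M2)/(c1'+c2') := by
  have k1 : (h₀ + c1*M2 + c2*M1)/(c1+c2) ≤ h₀/(c1+c2) + M2 := by
    rw [div_add' _ _ _ hd.ne', div_le_div_iff₀ hd hd]
    nlinarith [mul_le_mul_of_nonneg_right (mul_le_mul_of_nonneg_left h12 hc2) hd.le]
  have k2 : h₀/(c1+c2) ≤ h₀/(c1'+c2') := by gcongr
  have k3 : h₀/(c1'+c2') + M2 ≤ (h₀ + c1'*M3 + c2'*M2)/(c1'+c2') := by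
    rw [div_add' _ _ _ hd'.ne', div_le_div_iff₀ hd' hd']
    nlinarith [mul_le_mul_of_nonneg_right (mul_le_mul_of_nonneg_left h23 hc1') hd'.le]
  linarith

lemma d_pos1 {C₂ : ℕ} {μ₁ μ₂ : ℝ} (hμ₁ : 0 < μ₁) (hμ₂ : 0 < μ₂) (j ℓ : ℕ) :
    0 < dRate C₂ μ₁ μ₂ (j+1) ℓ := by
  simp only [dRate]
  push_cast
  positivity

lemma d_pos0 {C₂ : ℕ} {μ₁ μ₂ : ℝ} (hμ₁ : 0 < μ₁) (hμ₂ : 0 < μ₂) (hC₂ : 1 ≤ C₂)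
    (j ℓ : ℕ) : 0 < dRate C₂ μ₁ μ₂ j (ℓ+1) := by
  simp only [dRate]
  have hm : 1 ≤ min (ℓ+1) C₂ := by omega
  have hm' : (1:ℝ) ≤ ((min (ℓ+1) C₂ : ℕ):ℝ) := by exact_mod_cast hm
  have hj : (0:ℝ) ≤ (j:ℝ) := Nat.cast_nonneg j
  nlinarith

lemma d_mono {C₂ : ℕ} {μ₁ μ₂ : ℝ} (hμ₂ : 0 < μ₂) (hμ : μ₂ ≤ μ₁) (j ℓ : ℕ) :
    dRate C₂ μ₁ μ₂ j (ℓ+1) ≤ dRate C₂ μ₁ μ₂ (j+1) ℓ := by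
  simp only [dRate]
  have hm : min (ℓ+1) C₂ ≤ min ℓ C₂ + 1 := by omega
  have hm' : ((min (ℓ+1) C₂ : ℕ):ℝ) ≤ ((min ℓ C₂ : ℕ):ℝ) + 1 := by exact_mod_cast hm
  push_cast at hm' ⊢
  nlinarith [(by positivity : (0:ℝ) ≤ ((min ℓ C₂ : ℕ):ℝ)),
    (by positivity : (0:ℝ) ≤ ((min (ℓ+1) C₂ : ℕ):ℝ))]

lemma base_case {C₁ C₂ : ℕ} {μ₁ μ₂ h₀ h₁ h₂ : ℝ} {v : ℕ → ℕ → ℕ → ℝ}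
    (hv : IsValue C₁ C₂ μ₁ μ₂ h₀ h₁ h₂ v)
    (hμ₁ : 0 < μ₁) (hμ₂ : 0 < μ₂) (hC₂ : 1 ≤ C₂) (hC : C₂ < C₁)
    (hh₀ : 0 < h₀) (hh₂ : 0 < h₂) (hμ : μ₂ ≤ μ₁)
    (j ℓ : ℕ) (hsum : j + 1 + ℓ = C₁) :
    Dv v 1 (j+1) ℓ ≤ Dv v 0 (j+1) ℓ := by
  have e1 := v1_eq hv hμ₁ hμ₂ hC₂ hC (j+1) ℓ hsum
  have e2 := v1_eq hv hμ₁ hμ₂ hC₂ hC j (ℓ+1) (by omega)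
  simp only [Dv, Nat.add_sub_cancel]
  rw [e1, e2]
  have hM1 : min (h₁/μ₁) (gam C₂ μ₂ h₂ ℓ) ≤ min (h₁/μ₁) (gam C₂ μ₂ h₂ (ℓ+1)) :=
    min_le_min le_rfl (gam_mono C₂ hμ₂ hh₂.le hC₂ ℓ)
  have hM2 : min (h₁/μ₁) (gam C₂ μ₂ h₂ (ℓ+1)) ≤ min (h₁/μ₁) (gam C₂ μ₂ h₂ (ℓ+1+1)) :=
    min_le_min le_rfl (gam_mono C₂ hμ₂ hh₂.le hC₂ (ℓ+1))
  have hd := d_pos1 (C₂ := C₂) hμ₁ hμ₂ j ℓ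
  have hd' := d_pos0 (C₂ := C₂) hμ₁ hμ₂ hC₂ j ℓ
  have hdd := d_mono (C₂ := C₂) hμ₂ hμ j ℓ
  have key : (h₀ + ((j+1:ℕ):ℝ)*μ₁ * min (h₁/μ₁) (gam C₂ μ₂ h₂ (ℓ+1))
        + ((min ℓ C₂ : ℕ):ℝ)*μ₂ * min (h₁/μ₁) (gam C₂ μ₂ h₂ ℓ)) / dRate C₂ μ₁ μ₂ (j+1) ℓ
      ≤ (h₀ + (j:ℝ)*μ₁ * min (h₁/μ₁) (gam C₂ μ₂ h₂ (ℓ+1+1))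
        + ((min (ℓ+1) C₂ : ℕ):ℝ)*μ₂ * min (h₁/μ₁) (gam C₂ μ₂ h₂ (ℓ+1))) / dRate C₂ μ₁ μ₂ j (ℓ+1) := by
    have h1 : dRate C₂ μ₁ μ₂ (j+1) ℓ = ((j+1:ℕ):ℝ)*μ₁ + ((min ℓ C₂ : ℕ):ℝ)*μ₂ := rfl
    have h2 : dRate C₂ μ₁ μ₂ j (ℓ+1) = (j:ℝ)*μ₁ + ((min (ℓ+1) C₂ : ℕ):ℝ)*μ₂ := rfl
    rw [h1, h2] at *
    exact frac_mono (by positivity) (by positivity) (by positivity) (by positivity)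
      hd hd' hdd hh₀.le hM1 hM2
  linarith

set_option maxHeartbeats 2000000 in
lemma step_case {C₁ C₂ : ℕ} {μ₁ μ₂ h₀ h₁ h₂ : ℝ} {v : ℕ → ℕ → ℕ → ℝ}
    (hv : IsValue C₁ C₂ μ₁ μ₂ h₀ h₁ h₂ v)
    (hμ₁ : 0 < μ₁) (hμ₂ : 0 < μ₂) (hC₂ : 1 ≤ C₂) (hC : C₂ < C₁)
    (hh₀ : 0 < h₀) (hμ : μ₂ ≤ μ₁) (i : ℕ)
    (IH : ∀ k' ℓ' : ℕ, k' + ℓ' = C₁ → 1 ≤ k' →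
      Dv v (i+1) k' ℓ' ≤ Dv v i k' ℓ')
    (j ℓ : ℕ) (hsum : j + 1 + ℓ = C₁) :
    Dv v (i+1+1) (j+1) ℓ ≤ Dv v (i+1) (j+1) ℓ := by
  have e1 := hv.2.2 (i+1) (j+1) ℓ hsum
  have e2 := hv.2.2 i (j+1) ℓ hsum
  have e3 := hv.2.2 (i+1) j (ℓ+1) (by omega)
  have e4 := hv.2.2 i j (ℓ+1) (by omega)
  simp only [Nat.add_sub_cancel] at e1 e2 e3 e4
  rw [min_fst (v (i+1) (j+1) ℓ) (v (i+1) j (ℓ+1)),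
      min_snd (v (i+1) (j+1+1) (ℓ-1)) (v (i+1) (j+1) ℓ)] at e1
  rw [min_fst (v i (j+1) ℓ) (v i j (ℓ+1)),
      min_snd (v i (j+1+1) (ℓ-1)) (v i (j+1) ℓ)] at e2
  rw [min_fst (v (i+1) j (ℓ+1)) (v (i+1) (j-1) (ℓ+1+1)),
      min_snd (v (i+1) (j+1) ℓ) (v (i+1) j (ℓ+1))] at e3
  rw [min_fst (v i j (ℓ+1)) (v i (j-1) (ℓ+1+1)),
      min_snd (v i (j+1) ℓ) (v i j (ℓ+1))] at e4
  have hd : 0 < dRate C₂ μ₁ μ₂ (j+1) ℓ := d_pos1 (C₂ := C₂) hμ₁ hμ₂ j ℓ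
  have hd' : 0 < dRate C₂ μ₁ μ₂ j (ℓ+1) := d_pos0 (C₂ := C₂) hμ₁ hμ₂ hC₂ j ℓ
  have hdd : dRate C₂ μ₁ μ₂ j (ℓ+1) ≤ dRate C₂ μ₁ μ₂ (j+1) ℓ := d_mono (C₂ := C₂) hμ₂ hμ j ℓ
  have hd1eq : dRate C₂ μ₁ μ₂ (j+1) ℓ = ((j:ℝ)+1)*μ₁ + ((min ℓ C₂ : ℕ):ℝ)*μ₂ := by
    simp only [dRate]; push_cast; ring
  have hd2eq : dRate C₂ μ₁ μ₂ j (ℓ+1) = (j:ℝ)*μ₁ + ((min (ℓ+1) C₂ : ℕ):ℝ)*μ₂ := rfl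
  -- abbreviations (purely notational, in comments):
  -- A  := v i (j+1) ℓ - v i j (ℓ+1), A' at i+1
  -- B  := v i (j+1+1) (ℓ-1) - v i (j+1) ℓ, B' at i+1
  -- C  := v i j (ℓ+1) - v i (j-1) (ℓ+1+1), C' at i+1
  have hA : (v (i+1) (j+1) ℓ - v (i+1) j (ℓ+1)) ≤ (v i (j+1) ℓ - v i j (ℓ+1)) := by
    have := IH (j+1) ℓ hsum (by omega)
    simpa only [Dv, Nat.add_sub_cancel] using this
  have hP : max (v (i+1) (j+1) ℓ - v (i+1) j (ℓ+1)) 0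
      ≤ max (v i (j+1) ℓ - v i j (ℓ+1)) 0 := max_le_max hA le_rfl
  have hQ : min (v (i+1) (j+1) ℓ - v (i+1) j (ℓ+1)) 0
      ≤ min (v i (j+1) ℓ - v i j (ℓ+1)) 0 := min_le_min hA le_rfl
  have hPQ : max (v i (j+1) ℓ - v i j (ℓ+1)) 0 + min (v i (j+1) ℓ - v i j (ℓ+1)) 0
      = v i (j+1) ℓ - v i j (ℓ+1) := by
    rw [max_add_min]; ring
  have hPQ' : max (v (i+1) (j+1) ℓ - v (i+1) j (ℓ+1)) 0
        + min (v (i+1) (j+1) ℓ - v (i+1) j (ℓ+1)) 0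
      = v (i+1) (j+1) ℓ - v (i+1) j (ℓ+1) := by
    rw [max_add_min]; ring
  -- the two column difference equations
  have E1 : v (i+1+1) (j+1) ℓ - v (i+1) (j+1) ℓ
      = h₀ / dRate C₂ μ₁ μ₂ (j+1) ℓ + (v (i+1) (j+1) ℓ - v i (j+1) ℓ)
        + (((j:ℝ)+1)*μ₁/dRate C₂ μ₁ μ₂ (j+1) ℓ)
          * (max (v i (j+1) ℓ - v i j (ℓ+1)) 0
              - max (v (i+1) (j+1) ℓ - v (i+1) j (ℓ+1)) 0)
        - (((min ℓ C₂ : ℕ):ℝ)*μ₂/dRate C₂ μ₁ μ₂ (j+1) ℓ)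
          * (min (v i (j+1+1) (ℓ-1) - v i (j+1) ℓ) 0
              - min (v (i+1) (j+1+1) (ℓ-1) - v (i+1) (j+1) ℓ) 0) := by
    rw [e1, e2, hd1eq]
    push_cast
    field_simp
    ring
  have E2 : v (i+1+1) j (ℓ+1) - v (i+1) j (ℓ+1)
      = h₀ / dRate C₂ μ₁ μ₂ j (ℓ+1) + (v (i+1) j (ℓ+1) - v i j (ℓ+1))
        + ((j:ℝ)*μ₁/dRate C₂ μ₁ μ₂ j (ℓ+1))
          * (max (v i j (ℓ+1) - v i (j-1) (ℓ+1+1)) 0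
              - max (v (i+1) j (ℓ+1) - v (i+1) (j-1) (ℓ+1+1)) 0)
        - (((min (ℓ+1) C₂ : ℕ):ℝ)*μ₂/dRate C₂ μ₁ μ₂ j (ℓ+1))
          * (min (v i (j+1) ℓ - v i j (ℓ+1)) 0
              - min (v (i+1) (j+1) ℓ - v (i+1) j (ℓ+1)) 0) := by
    rw [e3, e4, hd2eq]
    push_cast
    field_simp
    ring
  -- bounds on the four correction terms
  have hc1 : ((j:ℝ)+1)*μ₁/dRate C₂ μ₁ μ₂ (j+1) ℓ ≤ 1 := by
    rw [div_le_one hd, hd1eq]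
    nlinarith [(by positivity : (0:ℝ) ≤ ((min ℓ C₂ : ℕ):ℝ)), hμ₂.le]
  have hc2' : ((min (ℓ+1) C₂ : ℕ):ℝ)*μ₂/dRate C₂ μ₁ μ₂ j (ℓ+1) ≤ 1 := by
    rw [div_le_one hd', hd2eq]
    nlinarith [(by positivity : (0:ℝ) ≤ (j:ℝ)), hμ₁.le]
  have T1 : (((j:ℝ)+1)*μ₁/dRate C₂ μ₁ μ₂ (j+1) ℓ)
        * (max (v i (j+1) ℓ - v i j (ℓ+1)) 0
            - max (v (i+1) (j+1) ℓ - v (i+1) j (ℓ+1)) 0)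
      ≤ max (v i (j+1) ℓ - v i j (ℓ+1)) 0
            - max (v (i+1) (j+1) ℓ - v (i+1) j (ℓ+1)) 0 :=
    mul_le_of_le_one_left (by linarith) hc1
  have T2 : (((min (ℓ+1) C₂ : ℕ):ℝ)*μ₂/dRate C₂ μ₁ μ₂ j (ℓ+1))
        * (min (v i (j+1) ℓ - v i j (ℓ+1)) 0
            - min (v (i+1) (j+1) ℓ - v (i+1) j (ℓ+1)) 0)
      ≤ min (v i (j+1) ℓ - v i j (ℓ+1)) 0
            - min (v (i+1) (j+1) ℓ - v (i+1) j (ℓ+1)) 0 :=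
    mul_le_of_le_one_left (by linarith) hc2'
  have T3 : 0 ≤ (((min ℓ C₂ : ℕ):ℝ)*μ₂/dRate C₂ μ₁ μ₂ (j+1) ℓ)
        * (min (v i (j+1+1) (ℓ-1) - v i (j+1) ℓ) 0
            - min (v (i+1) (j+1+1) (ℓ-1) - v (i+1) (j+1) ℓ) 0) := by
    rcases ℓ with _ | t
    · simp
    · have hB : (v (i+1) (j+1+1) (t+1-1) - v (i+1) (j+1) (t+1))
          ≤ (v i (j+1+1) (t+1-1) - v i (j+1) (t+1)) := by
        have := IH (j+1+1) t (by omega) (by omega)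
        simpa only [Dv, Nat.add_sub_cancel] using this
      have hminB := min_le_min hB (le_refl (0:ℝ))
      apply mul_nonneg
      · positivity
      · linarith
  have T4 : 0 ≤ ((j:ℝ)*μ₁/dRate C₂ μ₁ μ₂ j (ℓ+1))
        * (max (v i j (ℓ+1) - v i (j-1) (ℓ+1+1)) 0
            - max (v (i+1) j (ℓ+1) - v (i+1) (j-1) (ℓ+1+1)) 0) := by
    rcases j with _ | s
    · simp
    · have hCineq : (v (i+1) (s+1) (ℓ+1) - v (i+1) (s+1-1) (ℓ+1+1))
          ≤ (v i (s+1) (ℓ+1) - v i (s+1-1) (ℓ+1+1)) := by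
        have := IH (s+1) (ℓ+1) (by omega) (by omega)
        simpa only [Dv] using this
      have hmaxC := max_le_max hCineq (le_refl (0:ℝ))
      apply mul_nonneg
      · positivity
      · linarith
  have hh0d : h₀ / dRate C₂ μ₁ μ₂ (j+1) ℓ ≤ h₀ / dRate C₂ μ₁ μ₂ j (ℓ+1) := by
    gcongr
  simp only [Dv, Nat.add_sub_cancel]
  linarith [E1, E2, T1, T2, T3, T4, hh0d, hPQ, hPQ', hA]


end Stmt0Aux

theorem stmt0
    (C₁ C₂ : ℕ) (hC₂pos : 1 ≤ C₂) (hC : C₂ < C₁)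
    (μ₁ μ₂ h₀ h₁ h₂ : ℝ)
    (hμ₁ : 0 < μ₁) (hμ₂ : 0 < μ₂)
    (hh₀ : 0 < h₀) (hh₁ : 0 < h₁) (hh₂ : 0 < h₂)
    (v : ℕ → ℕ → ℕ → ℝ) (hv : IsValue C₁ C₂ μ₁ μ₂ h₀ h₁ h₂ v)
    (hμ : μ₂ ≤ μ₁) :
    ∀ i k ℓ : ℕ, k + ℓ = C₁ → 1 ≤ k →
      0 ≤ Dv v i k ℓ - Dv v (i + 1) k ℓ := by
  intro i k ℓ hkl hk
  have key : ∀ n : ℕ, ∀ k' ℓ' : ℕ, k' + ℓ' = C₁ → 1 ≤ k' →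
      Dv v (n+1) k' ℓ' ≤ Dv v n k' ℓ' := by
    intro n
    induction n with
    | zero =>
      intro k' ℓ' h hk'
      obtain ⟨j, rfl⟩ : ∃ j, k' = j + 1 := ⟨k' - 1, by omega⟩
      exact Stmt0Aux.base_case hv hμ₁ hμ₂ hC₂pos hC hh₀ hh₂ hμ j ℓ' h
    | succ m IHm =>
      intro k' ℓ' h hk'
      obtain ⟨j, rfl⟩ : ∃ j, k' = j + 1 := ⟨k' - 1, by omega⟩
      exact Stmt0Aux.step_case hv hμ₁ hμ₂ hC₂pos hC hh₀ hμ m IHm j ℓ' h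
  have := key i k ℓ hkl hk
  linarith
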